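/- Let k be a field and M a k-module. Let ε : Λ(M) → k be the canonical augmentation of the exterior algebra of M over k (the k-algebra homomorphism restricting to the identity on k and vanishing on M), and let I = ker ε be the augmentation ideal. Then the module of indecomposables I/I² is k-linearly isomorphic to M; in particular the indecomposables of the exterior algebra are exactly (the classes of) the generators. -/

import Mathlib

/-- For a field `k` and a `k`-module `M`, let `ε : Λ(M) → k` be the canonical
augmentation of the exterior algebra (killing `M`) and `I = ker ε` the
augmentation ideal. Then the module of indecomposables `I/I²` is `k`-linearly
isomorphic tsq `M`. -/
theorem stmt_10 {k M : Type*} [Field k] [AddCommGroup M] [Module k M]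
    (I : Submodule k (ExteriorAlgebra k M))
    (hI : I = LinearMap.ker (ExteriorAlgebra.algebraMapInv (R := k) (M := M)).toLinearMap) :
    Nonempty ((↥I ⧸ Submodule.comap I.subtype (I * I)) ≃ₗ[k] M) := by
  letI : Module kᵐᵒᵖ M := Module.compHom _ ((RingHom.id k).fromOpposite mul_comm)
  haveI : IsCentralScalar k M := ⟨fun r m => rfl⟩
  set tsq := ExteriorAlgebra.toTrivSqZeroExt (R := k) (M := M) with htsq
  -- a membership criterion for I
  have hmemI : ∀ x, x ∈ I ↔ ExteriorAlgebra.algebraMapInv (R := k) (M := M) x = 0 := by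
    intro x; rw [hI]; exact Iff.rfl
  -- ι m ∈ I
  have hιI : ∀ m : M, ExteriorAlgebra.ι k m ∈ I := by
    intro m
    rw [hmemI]
    simp [ExteriorAlgebra.algebraMapInv]
  -- fst ∘ tsq = algebraMapInv
  have hfst : ∀ x : ExteriorAlgebra k M,
      (tsq x).fst = ExteriorAlgebra.algebraMapInv (R := k) (M := M) x := by
    have h : (TrivSqZeroExt.fstHom k k M).comp tsq
        = ExteriorAlgebra.algebraMapInv (R := k) (M := M) := by
      ext m
      simp [htsq, ExteriorAlgebra.algebraMapInv]
    intro x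
    exact congrArg (fun f => f x) h
  -- snd ∘ tsq vanishes on I*I
  have hsndII : ∀ x ∈ I * I, (tsq x).snd = 0 := by
    intro x hx
    refine Submodule.mul_induction_on hx ?_ ?_
    · intro a ha b hb
      have hfa : (tsq a).fst = 0 := by rw [hfst]; exact (hmemI a).1 ha
      have hfb : (tsq b).fst = 0 := by rw [hfst]; exact (hmemI b).1 hb
      rw [map_mul, TrivSqZeroExt.snd_mul, hfa, hfb]
      simp
    · intro a b ha hb
      rw [map_add, TrivSqZeroExt.snd_add, ha, hb, add_zero]
  -- Every element of I is ι m + (element of I*I)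
  have hdec : ∀ x ∈ I, ∃ m : M, ∃ y ∈ I * I, x = ExteriorAlgebra.ι k m + y := by
    have key : ∀ x : ExteriorAlgebra k M,
        x - algebraMap k _ (ExteriorAlgebra.algebraMapInv (R := k) (M := M) x)
          ∈ LinearMap.range (ExteriorAlgebra.ι k (M := M)) ⊔ I * I := by
      intro x
      induction x using ExteriorAlgebra.induction with
      | algebraMap r =>
          simp [ExteriorAlgebra.algebraMap_leftInverse (R := k) (M := M) r]
      | ι m =>
          have h0 : ExteriorAlgebra.algebraMapInv (R := k) (M := M)
              (ExteriorAlgebra.ι k m) = 0 := (hmemI _).1 (hιI m)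
          rw [h0, map_zero, sub_zero]
          exact Submodule.mem_sup_left ⟨m, rfl⟩
      | mul a b ha hb =>
          set εa := ExteriorAlgebra.algebraMapInv (R := k) (M := M) a with hεa
          set εb := ExteriorAlgebra.algebraMapInv (R := k) (M := M) b with hεb
          have haI : a - algebraMap k _ εa ∈ I := by
            rw [hmemI]
            simp [ExteriorAlgebra.algebraMap_leftInverse (R := k) (M := M) εa, hεa]
          have hbI : b - algebraMap k _ εb ∈ I := by
            rw [hmemI]
            simp [ExteriorAlgebra.algebraMap_leftInverse (R := k) (M := M) εb, hεb]
          have heq : a * b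
                - algebraMap k _ (ExteriorAlgebra.algebraMapInv (R := k) (M := M) (a * b))
              = (a - algebraMap k _ εa) * (b - algebraMap k _ εb)
                + εa • (b - algebraMap k _ εb) + εb • (a - algebraMap k _ εa) := by
            simp only [map_mul, Algebra.smul_def, mul_sub, sub_mul,
              Algebra.commutes εb a,
              Algebra.commutes εb (algebraMap k (ExteriorAlgebra k M) εa)]
            abel
          rw [heq]
          exact Submodule.add_mem _
            (Submodule.add_mem _
              (Submodule.mem_sup_right (Submodule.mul_mem_mul haI hbI))
              (Submodule.smul_mem _ _ hb))
            (Submodule.smul_mem _ _ ha)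
      | add a b ha hb =>
          have h : a + b
                - algebraMap k _ (ExteriorAlgebra.algebraMapInv (R := k) (M := M) (a + b))
              = (a - algebraMap k _ (ExteriorAlgebra.algebraMapInv (R := k) (M := M) a))
                + (b - algebraMap k _ (ExteriorAlgebra.algebraMapInv (R := k) (M := M) b)) := by
            rw [map_add, map_add]; abel
          rw [h]
          exact Submodule.add_mem _ ha hb
    intro x hx
    have h0 : ExteriorAlgebra.algebraMapInv (R := k) (M := M) x = 0 := (hmemI x).1 hx
    have hx' := key x
    rw [h0, map_zero, sub_zero] at hx'
    rcases Submodule.mem_sup.mp hx' with ⟨u, ⟨m, rfl⟩, y, hy, rfl⟩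
    exact ⟨m, y, hy, rfl⟩
  -- the linear map I → M
  set F : ↥I →ₗ[k] M :=
    ((TrivSqZeroExt.sndHom k M).comp tsq.toLinearMap).comp I.subtype with hF
  set N := Submodule.comap I.subtype (I * I) with hN
  have hNF : N ≤ LinearMap.ker F := by
    intro x hx
    simp only [LinearMap.mem_ker, hF, LinearMap.comp_apply]
    exact hsndII _ hx
  set G := N.liftQ F hNF with hG
  have hsurj : Function.Surjective G := by
    intro m
    refine ⟨Submodule.Quotient.mk ⟨ExteriorAlgebra.ι k m, hιI m⟩, ?_⟩
    simp only [hG, Submodule.liftQ_apply, hF, LinearMap.comp_apply, Submodule.subtype_apply,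
      TrivSqZeroExt.sndHom_apply, AlgHom.toLinearMap_apply]
    rw [htsq, ExteriorAlgebra.toTrivSqZeroExt_ι]
    simp
  have hinj : Function.Injective G := by
    rw [← LinearMap.ker_eq_bot]
    refine Submodule.ker_liftQ_eq_bot _ _ _ ?_
    intro x hx
    have hx0 : (tsq x.1).snd = 0 := hx
    rcases hdec x.1 x.2 with ⟨m, y, hy, hxy⟩
    have : m = 0 := by
      have := congrArg (fun z => (tsq z).snd) hxy
      simp only [map_add, TrivSqZeroExt.snd_add, hsndII y hy, add_zero] at this
      rw [htsq, ExteriorAlgebra.toTrivSqZeroExt_ι] at this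
      rw [htsq] at hx0; simpa [hx0] using this.symm
    have : x.1 ∈ I * I := by
      rw [hxy, this, map_zero, zero_add]; exact hy
    exact this
  exact ⟨LinearEquiv.ofBijective G ⟨hinj, hsurj⟩⟩
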